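/- Let M = (E, I) be a matroid on a finite ground set E, let c : E → ℝ≥0 and B ∈ ℝ. Then every extreme point x of the polytope P_M ∩ {x ∈ ℝ^E : Σ_{e∈E} c(e)·x_e ≤ B} has at most two non-integral entries, i.e., |{e ∈ E : x_e ∉ {0, 1}}| ≤ 2. -/

import Mathlib

open Finset
open scoped Classical

/-- A matroid on a finite ground set `E`, given by its collection of independent
finsets, which is non-empty, hereditary, and satisfies the exchange property. -/
structure FinMatroid (E : Type) [Fintype E] [DecidableEq E] where
  Indep : Finset E → Prop
  exists_indep : ∃ A : Finset E, Indep A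
  indep_subset : ∀ ⦃A B : Finset E⦄, Indep A → B ⊆ A → Indep B
  indep_exchange : ∀ ⦃A B : Finset E⦄, Indep A → Indep B → B.card < A.card →
    ∃ e ∈ A \ B, Indep (insert e B)

/-- The indicator vector `1^B ∈ {0,1}^E` of a finset `B`. -/
def indicatorVec {E : Type} [Fintype E] [DecidableEq E] (B : Finset E) : E → ℝ :=
  fun e => if e ∈ B then 1 else 0

/-- The matroid polytope `P_M = conv {1^B : B ∈ I}`. -/
def FinMatroid.polytope {E : Type} [Fintype E] [DecidableEq E] (M : FinMatroid E) :
    Set (E → ℝ) :=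
  convexHull ℝ {x : E → ℝ | ∃ B : Finset E, M.Indep B ∧ x = indicatorVec B}

namespace FinMatroid

variable {E : Type} [Fintype E] [DecidableEq E] (N : FinMatroid E)

lemma indep_empty : N.Indep ∅ := by
  obtain ⟨A, hA⟩ := N.exists_indep
  exact N.indep_subset hA (Finset.empty_subset A)

noncomputable def rk (S : Finset E) : ℕ := (S.powerset.filter N.Indep).sup Finset.card

lemma card_le_rk {I S : Finset E} (hIS : I ⊆ S) (hI : N.Indep I) : I.card ≤ N.rk S :=
  Finset.le_sup (by simp [Finset.mem_filter, Finset.mem_powerset, hIS, hI])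

lemma exists_rk_witness (S : Finset E) : ∃ I, I ⊆ S ∧ N.Indep I ∧ I.card = N.rk S := by
  have hne : (S.powerset.filter N.Indep).Nonempty :=
    ⟨∅, by simp [Finset.mem_filter, Finset.mem_powerset, N.indep_empty]⟩
  obtain ⟨I, hI, hEq⟩ := Finset.exists_mem_eq_sup _ hne Finset.card
  simp only [Finset.mem_filter, Finset.mem_powerset] at hI
  exact ⟨I, hI.1, hI.2, hEq.symm⟩

lemma rk_le_card (S : Finset E) : N.rk S ≤ S.card := by
  apply Finset.sup_le
  intro I hI
  simp only [Finset.mem_filter, Finset.mem_powerset] at hI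
  exact Finset.card_le_card hI.1

lemma indep_of_rk_eq_card {S : Finset E} (h : N.rk S = S.card) : N.Indep S := by
  obtain ⟨I, hIS, hI, hcard⟩ := N.exists_rk_witness S
  have : I = S := Finset.eq_of_subset_of_card_le hIS (by omega)
  exact this ▸ hI

lemma rk_eq_card_of_indep {S : Finset E} (h : N.Indep S) : N.rk S = S.card :=
  le_antisymm (N.rk_le_card S) (N.card_le_rk (Finset.Subset.refl S) h)

lemma rk_mono {S T : Finset E} (h : S ⊆ T) : N.rk S ≤ N.rk T := by
  obtain ⟨I, hIS, hI, hcard⟩ := N.exists_rk_witness S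
  exact hcard ▸ N.card_le_rk (hIS.trans h) hI

lemma exists_extend : ∀ (n : ℕ) {I S : Finset E}, N.rk S - I.card ≤ n → N.Indep I → I ⊆ S →
    ∃ J, I ⊆ J ∧ J ⊆ S ∧ N.Indep J ∧ J.card = N.rk S := by
  intro n
  induction n with
  | zero =>
    intro I S hn hI hIS
    have h1 : I.card ≤ N.rk S := N.card_le_rk hIS hI
    have : I.card = N.rk S := by omega
    exact ⟨I, Finset.Subset.refl I, hIS, hI, this⟩
  | succ n ih =>
    intro I S hn hI hIS
    by_cases hcase : N.rk S ≤ I.card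
    · have : I.card = N.rk S := le_antisymm (N.card_le_rk hIS hI) hcase
      exact ⟨I, Finset.Subset.refl I, hIS, hI, this⟩
    · push_neg at hcase
      obtain ⟨W, hWS, hW, hWcard⟩ := N.exists_rk_witness S
      obtain ⟨e, he, hins⟩ := N.indep_exchange hW hI (by omega)
      have heI : e ∉ I := (Finset.mem_sdiff.mp he).2
      have heS : e ∈ S := hWS (Finset.mem_sdiff.mp he).1
      have hcard : (insert e I).card = I.card + 1 := Finset.card_insert_of_notMem heI
      obtain ⟨J, hJ1, hJ2, hJ3, hJ4⟩ := ih (I := insert e I) (S := S) (by omega) hins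
        (Finset.insert_subset heS hIS)
      exact ⟨J, (Finset.subset_insert e I).trans hJ1, hJ2, hJ3, hJ4⟩

lemma rk_insert_mono {X Z : Finset E} {e : E} (h : N.rk (insert e X) = N.rk X)
    (hXZ : X ⊆ Z) : N.rk (insert e Z) = N.rk Z := by
  by_cases heZ : e ∈ Z
  · rw [Finset.insert_eq_self.mpr heZ]
  have heX : e ∉ X := fun hh => heZ (hXZ hh)
  refine le_antisymm ?_ (N.rk_mono (Finset.subset_insert e Z))
  by_contra hlt
  push_neg at hlt
  obtain ⟨IX, hIXsub, hIX, hIXcard⟩ := N.exists_rk_witness X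
  -- insert e IX is dependent
  have hdep : ¬ N.Indep (insert e IX) := by
    intro hind
    have h1 : (insert e IX).card ≤ N.rk (insert e X) :=
      N.card_le_rk (Finset.insert_subset_insert e hIXsub) hind
    have heIX : e ∉ IX := fun hh => heX (hIXsub hh)
    rw [Finset.card_insert_of_notMem heIX] at h1
    omega
  obtain ⟨IZ, hIZ1, hIZ2, hIZ3, hIZ4⟩ := N.exists_extend (N.rk Z - IX.card) (le_refl _) hIX
    (hIXsub.trans hXZ)
  obtain ⟨J, hJsub, hJ, hJcard⟩ := N.exists_rk_witness (insert e Z)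
  obtain ⟨z, hz, hzins⟩ := N.indep_exchange hJ hIZ3 (by omega)
  have hzJ := (Finset.mem_sdiff.mp hz).1
  have hzIZ := (Finset.mem_sdiff.mp hz).2
  rcases Finset.mem_insert.mp (hJsub hzJ) with hze | hzZ
  · subst hze
    exact hdep (N.indep_subset hzins (Finset.insert_subset_insert z hIZ1))
  · have : (insert z IZ).card ≤ N.rk Z :=
      N.card_le_rk (Finset.insert_subset hzZ hIZ2) hzins
    rw [Finset.card_insert_of_notMem hzIZ] at this
    omega

lemma rk_union_eq {X Y : Finset E} (hY : ∀ y ∈ Y, N.rk (insert y X) = N.rk X) :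
    N.rk (X ∪ Y) = N.rk X := by
  induction Y using Finset.induction with
  | empty => rw [Finset.union_empty]
  | @insert y Y hy ih =>
    have h1 : N.rk (X ∪ Y) = N.rk X := ih (fun z hz => hY z (Finset.mem_insert_of_mem hz))
    have h2 := N.rk_insert_mono (hY y (Finset.mem_insert_self y Y))
      (Finset.subset_union_left : X ⊆ X ∪ Y)
    rw [Finset.union_insert, h2, h1]

lemma exists_minimal_dep : ∀ (n : ℕ) {S : Finset E}, S.card ≤ n → ¬ N.Indep S →
    ∃ C, C ⊆ S ∧ ¬ N.Indep C ∧ ∀ g ∈ C, N.Indep (C.erase g) := by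
  intro n
  induction n with
  | zero =>
    intro S hcard hdep
    rw [Nat.le_zero, Finset.card_eq_zero] at hcard
    exact absurd (hcard ▸ N.indep_empty) hdep
  | succ n ih =>
    intro S hcard hdep
    by_cases hall : ∀ g ∈ S, N.Indep (S.erase g)
    · exact ⟨S, Finset.Subset.refl S, hdep, hall⟩
    · push_neg at hall
      obtain ⟨g, hg, hgdep⟩ := hall
      have : (S.erase g).card ≤ n := by
        have := Finset.card_erase_of_mem hg
        omega
      obtain ⟨C, hC1, hC2, hC3⟩ := ih this hgdep
      exact ⟨C, hC1.trans (Finset.erase_subset g S), hC2, hC3⟩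

lemma circuit_rk_erase {C : Finset E} (hC : ¬ N.Indep C) (hmin : ∀ g ∈ C, N.Indep (C.erase g))
    {g : E} (hg : g ∈ C) : N.rk C = N.rk (C.erase g) := by
  have h1 : N.rk (C.erase g) = C.card - 1 := by
    rw [N.rk_eq_card_of_indep (hmin g hg), Finset.card_erase_of_mem hg]
  have h2 : N.rk C ≤ C.card := N.rk_le_card C
  have h3 : N.rk C ≠ C.card := fun h => hC (N.indep_of_rk_eq_card h)
  have h4 : N.rk (C.erase g) ≤ N.rk C := N.rk_mono (Finset.erase_subset g C)
  have h5 : 1 ≤ C.card := Finset.card_pos.mpr ⟨g, hg⟩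
  omega

lemma fund {B : Finset E} {e : E} (heB : e ∉ B) (hB : N.Indep B)
    {C : Finset E} (hCsub : C ⊆ insert e B) (hCdep : ¬ N.Indep C)
    (hCmin : ∀ g ∈ C, N.Indep (C.erase g)) {f : E} (hf : f ∈ C) (hfe : f ≠ e) :
    N.Indep (insert e (B.erase f)) := by
  have heC : e ∈ C := by
    by_contra heC
    exact hCdep (N.indep_subset hB (fun y hy => by
      rcases Finset.mem_insert.mp (hCsub hy) with h | h
      · exact absurd (h ▸ hy) heC
      · exact h))
  have hfB : f ∈ B := by
    rcases Finset.mem_insert.mp (hCsub hf) with h | h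
    · exact absurd h hfe
    · exact h
  by_contra hdep
  obtain ⟨C', hC'sub, hC'dep, hC'min⟩ :=
    N.exists_minimal_dep (insert e (B.erase f)).card (le_refl _) hdep
  have heC' : e ∈ C' := by
    by_contra heC'
    refine hC'dep (N.indep_subset hB (fun y hy => ?_))
    rcases Finset.mem_insert.mp (hC'sub hy) with h | h
    · exact absurd (h ▸ hy) heC'
    · exact Finset.mem_of_mem_erase h
  have hfC' : f ∉ C' := by
    intro hfC'
    rcases Finset.mem_insert.mp (hC'sub hfC') with h | h
    · exact hfe h
    · exact (Finset.notMem_erase f B) h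
  set D := C ∪ C' with hD
  have hDsub : D ⊆ insert e B := by
    apply Finset.union_subset hCsub (hC'sub.trans ?_)
    exact Finset.insert_subset_insert e (Finset.erase_subset f B)
  have heD : e ∈ D := Finset.mem_union_left _ heC
  have hfD : f ∈ D := Finset.mem_union_left _ hf
  have hDe_indep : N.Indep (D.erase e) := by
    refine N.indep_subset hB (fun y hy => ?_)
    have hyD := Finset.mem_of_mem_erase hy
    have hyne := Finset.ne_of_mem_erase hy
    rcases Finset.mem_insert.mp (hDsub hyD) with h | h
    · exact absurd h hyne
    · exact h
  -- rk D = rk (D.erase e)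
  have hDe : N.rk D = N.rk (D.erase e) := by
    have h1 : N.rk (insert e (C'.erase e)) = N.rk (C'.erase e) := by
      rw [Finset.insert_erase heC']
      exact N.circuit_rk_erase hC'dep hC'min heC'
    have h2 : C'.erase e ⊆ D.erase e :=
      Finset.erase_subset_erase e (Finset.subset_union_right)
    have h3 := N.rk_insert_mono h1 h2
    rwa [Finset.insert_erase heD] at h3
  have hDf : N.rk D = N.rk (D.erase f) := by
    have h1 : N.rk (insert f (C.erase f)) = N.rk (C.erase f) := by
      rw [Finset.insert_erase hf]
      exact N.circuit_rk_erase hCdep hCmin hf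
    have h2 : C.erase f ⊆ D.erase f :=
      Finset.erase_subset_erase f (Finset.subset_union_left)
    have h3 := N.rk_insert_mono h1 h2
    rwa [Finset.insert_erase hfD] at h3
  have hcardDe : (D.erase e).card = D.card - 1 := Finset.card_erase_of_mem heD
  have hcardDf : (D.erase f).card = D.card - 1 := Finset.card_erase_of_mem hfD
  have h4 : N.rk (D.erase e) = D.card - 1 := by
    rw [N.rk_eq_card_of_indep hDe_indep, hcardDe]
  have h5 : N.rk (D.erase f) = (D.erase f).card := by omega
  have hDf_indep : N.Indep (D.erase f) := N.indep_of_rk_eq_card h5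
  refine hC'dep (N.indep_subset hDf_indep (fun y hy => ?_))
  refine Finset.mem_erase.mpr ⟨fun hyf => hfC' (hyf ▸ hy), Finset.mem_union_right _ hy⟩

lemma symx {A B : Finset E} (hA : N.Indep A) (hB : N.Indep B) (hcard : A.card = B.card)
    (hmax : ∀ S, N.Indep S → S.card ≤ B.card) (hne : A ≠ B) :
    ∃ e f, e ∈ A ∧ e ∉ B ∧ f ∈ B ∧ f ∉ A ∧
      N.Indep (insert f (A.erase e)) ∧ N.Indep (insert e (B.erase f)) := by
  have hAB : (A \ B).Nonempty := by
    rw [Finset.sdiff_nonempty]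
    intro hsub
    exact hne (Finset.eq_of_subset_of_card_le hsub (le_of_eq hcard.symm))
  obtain ⟨e, he⟩ := hAB
  have heA : e ∈ A := (Finset.mem_sdiff.mp he).1
  have heB : e ∉ B := (Finset.mem_sdiff.mp he).2
  have hdepeB : ¬ N.Indep (insert e B) := by
    intro h
    have := hmax _ h
    rw [Finset.card_insert_of_notMem heB] at this
    omega
  obtain ⟨C, hCsub, hCdep, hCmin⟩ :=
    N.exists_minimal_dep (insert e B).card (le_refl _) hdepeB
  have heC : e ∈ C := by
    by_contra heC
    exact hCdep (N.indep_subset hB (fun y hy => by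
      rcases Finset.mem_insert.mp (hCsub hy) with h | h
      · exact absurd (h ▸ hy) heC
      · exact h))
  -- claim: ∃ f ∈ C.erase e, f ∉ A ∧ Indep (insert f (A.erase e))
  have hclaim : ∃ f ∈ C.erase e, f ∉ A ∧ N.Indep (insert f (A.erase e)) := by
    by_contra hcon
    push_neg at hcon
    have hAe_indep : N.Indep (A.erase e) := N.indep_subset hA (Finset.erase_subset e A)
    have hAe_card : (A.erase e).card = A.card - 1 := Finset.card_erase_of_mem heA
    have hstep : ∀ f ∈ C.erase e, N.rk (insert f (A.erase e)) = N.rk (A.erase e) := by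
      intro f hfCe
      have hfC := Finset.mem_of_mem_erase hfCe
      have hfe := Finset.ne_of_mem_erase hfCe
      by_cases hfA : f ∈ A
      · rw [Finset.insert_eq_self.mpr (Finset.mem_erase.mpr ⟨hfe, hfA⟩)]
      · have hdep := hcon f hfCe hfA
        have hfAe : f ∉ A.erase e := fun h => hfA (Finset.mem_of_mem_erase h)
        have hins_card : (insert f (A.erase e)).card = A.card :=  by
          rw [Finset.card_insert_of_notMem hfAe, hAe_card]
          have : 1 ≤ A.card := Finset.card_pos.mpr ⟨e, heA⟩
          omega
        have h1 : N.rk (insert f (A.erase e)) ≤ A.card := hins_card ▸ N.rk_le_card _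
        have h2 : N.rk (insert f (A.erase e)) ≠ A.card := by
          intro h
          exact hdep (N.indep_of_rk_eq_card (h.trans hins_card.symm))
        have h3 : N.rk (A.erase e) ≤ N.rk (insert f (A.erase e)) :=
          N.rk_mono (Finset.subset_insert f _)
        have h4 : N.rk (A.erase e) = A.card - 1 := by
          rw [N.rk_eq_card_of_indep hAe_indep, hAe_card]
        have h5 : 1 ≤ A.card := Finset.card_pos.mpr ⟨e, heA⟩
        omega
    have hunion : N.rk ((A.erase e) ∪ (C.erase e)) = N.rk (A.erase e) :=
      N.rk_union_eq hstep
    have h1 : N.rk (insert e (C.erase e)) = N.rk (C.erase e) := by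
      rw [Finset.insert_erase heC]
      exact N.circuit_rk_erase hCdep hCmin heC
    have h2 := N.rk_insert_mono h1 ((Finset.subset_union_right : C.erase e ⊆ (A.erase e) ∪ (C.erase e)))
    have hAsub : A ⊆ insert e ((A.erase e) ∪ (C.erase e)) := by
      intro y hy
      by_cases hye : y = e
      · rw [hye]; exact Finset.mem_insert_self e _
      · exact Finset.mem_insert_of_mem (Finset.mem_union_left _
          (Finset.mem_erase.mpr ⟨hye, hy⟩))
    have h3 : A.card ≤ N.rk (insert e ((A.erase e) ∪ (C.erase e))) := N.card_le_rk hAsub hA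
    have h4 : N.rk (A.erase e) = A.card - 1 := by
      rw [N.rk_eq_card_of_indep hAe_indep, Finset.card_erase_of_mem heA]
    have h5 : 1 ≤ A.card := Finset.card_pos.mpr ⟨e, heA⟩
    omega
  obtain ⟨f, hfCe, hfA, hfind⟩ := hclaim
  have hfC := Finset.mem_of_mem_erase hfCe
  have hfe := Finset.ne_of_mem_erase hfCe
  have hfB : f ∈ B := by
    rcases Finset.mem_insert.mp (hCsub hfC) with h | h
    · exact absurd h hfe
    · exact h
  exact ⟨e, f, heA, heB, hfB, hfA, hfind, N.fund heB hB hCsub hCdep hCmin hfC hfe⟩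

def trunc (M : FinMatroid E) (k : ℕ) : FinMatroid E where
  Indep S := M.Indep S ∧ S.card ≤ k
  exists_indep := ⟨∅, M.indep_empty, by simp⟩
  indep_subset := fun A B hA hBA =>
    ⟨M.indep_subset hA.1 hBA, le_trans (Finset.card_le_card hBA) hA.2⟩
  indep_exchange := by
    intro A B hA hB hcard
    obtain ⟨e, he, hins⟩ := M.indep_exchange hA.1 hB.1 hcard
    refine ⟨e, he, hins, ?_⟩
    have heB : e ∉ B := (Finset.mem_sdiff.mp he).2
    rw [Finset.card_insert_of_notMem heB]
    omega

theorem sym_exchange (M : FinMatroid E) {A B : Finset E} (hA : M.Indep A) (hB : M.Indep B)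
    (hcard : A.card = B.card) (hne : A ≠ B) :
    ∃ e f, e ∈ A ∧ e ∉ B ∧ f ∈ B ∧ f ∉ A ∧
      M.Indep (insert f (A.erase e)) ∧ M.Indep (insert e (B.erase f)) := by
  set N := M.trunc B.card with hN
  have hA' : N.Indep A := ⟨hA, le_of_eq hcard⟩
  have hB' : N.Indep B := ⟨hB, le_refl _⟩
  have hmax : ∀ S, N.Indep S → S.card ≤ B.card := fun S hS => hS.2
  obtain ⟨e, f, h1, h2, h3, h4, h5, h6⟩ := N.symx hA' hB' hcard hmax hne
  exact ⟨e, f, h1, h2, h3, h4, h5.1, h6.1⟩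

end FinMatroid

namespace ProofAux

variable {E : Type} [Fintype E] [DecidableEq E]

lemma indicatorVec_injective : Function.Injective (indicatorVec (E := E)) := by
  intro A B h
  ext e
  have := congrFun h e
  simp only [indicatorVec] at this
  constructor <;> intro hm
  · by_contra hB
    rw [if_pos hm, if_neg hB] at this; norm_num at this
  · by_contra hA
    rw [if_neg hA, if_pos hm] at this; norm_num at this

lemma exists_mem_symmDiff {A B : Finset E} (hne : A ≠ B) :
    ∃ e, (e ∈ A ∧ e ∉ B) ∨ (e ∈ B ∧ e ∉ A) := by
  by_contra h
  push_neg at h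
  refine hne (Finset.ext fun e => ?_)
  have := h e
  tauto

lemma indicator_mem_polytope (M : FinMatroid E) {S : Finset E} (h : M.Indep S) :
    indicatorVec S ∈ M.polytope :=
  subset_convexHull ℝ _ ⟨S, h, rfl⟩

lemma polytope_convex (M : FinMatroid E) : Convex ℝ M.polytope :=
  convex_convexHull ℝ _

lemma comb_mem_polytope (M : FinMatroid E) {ι : Type} (t : Finset ι) (w : ι → ℝ)
    (g : ι → Finset E) (hw : ∀ i ∈ t, 0 ≤ w i) (h1 : ∑ i ∈ t, w i = 1)
    (hind : ∀ i ∈ t, M.Indep (g i)) :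
    (∑ i ∈ t, w i • indicatorVec (g i)) ∈ M.polytope := by
  rw [← Finset.centerMass_eq_of_sum_1 _ _ h1]
  exact Finset.centerMass_mem_convexHull t hw (by rw [h1]; norm_num)
    (fun i hi => ⟨g i, hind i hi, rfl⟩)

/-- The forward feasible cone at `x`. -/
def feas (M : FinMatroid E) (x d : E → ℝ) : Prop :=
  ∃ ε : ℝ, 0 < ε ∧ x + ε • d ∈ M.polytope

lemma feas_shrink {M : FinMatroid E} {x d : E → ℝ} (hx : x ∈ M.polytope)
    {ε : ℝ} (hε : 0 < ε) (hmem : x + ε • d ∈ M.polytope) {ε' : ℝ} (h0 : 0 < ε')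
    (hle : ε' ≤ ε) : x + ε' • d ∈ M.polytope := by
  have hb0 : 0 ≤ ε' / ε := le_of_lt (div_pos h0 hε)
  have hb1 : ε' / ε ≤ 1 := (div_le_one hε).mpr hle
  have := (polytope_convex M) hx hmem (a := 1 - ε'/ε) (b := ε'/ε) (by linarith) hb0 (by ring)
  have heq : (1 - ε'/ε) • x + (ε'/ε) • (x + ε • d) = x + ε' • d := by
    funext y
    simp only [Pi.add_apply, Pi.smul_apply, smul_eq_mul]
    have h2 : ε' / ε * ε = ε' := div_mul_cancel₀ ε' (ne_of_gt hε)
    linear_combination d y * h2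
  rwa [heq] at this

lemma feas_fwd {M : FinMatroid E} {x : E → ℝ} (hx : x ∈ M.polytope) {p : E → ℝ}
    (hp : p ∈ M.polytope) : feas M x (p - x) :=
  ⟨1, one_pos, by rw [one_smul]; simpa using hp⟩

lemma feas_zero {M : FinMatroid E} {x : E → ℝ} (hx : x ∈ M.polytope) : feas M x 0 :=
  ⟨1, one_pos, by simpa using hx⟩

lemma feas_add {M : FinMatroid E} {x d1 d2 : E → ℝ} (h1 : feas M x d1) (h2 : feas M x d2) :
    feas M x (d1 + d2) := by
  obtain ⟨ε1, hε1, hm1⟩ := h1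
  obtain ⟨ε2, hε2, hm2⟩ := h2
  refine ⟨ε1 * ε2 / (ε1 + ε2), by positivity, ?_⟩
  have hs : 0 < ε1 + ε2 := by linarith
  have heq : x + (ε1 * ε2 / (ε1 + ε2)) • (d1 + d2) =
      (ε2 / (ε1 + ε2)) • (x + ε1 • d1) + (ε1 / (ε1 + ε2)) • (x + ε2 • d2) := by
    funext y
    simp only [Pi.add_apply, Pi.smul_apply, smul_eq_mul]
    field_simp
    ring
  rw [heq]
  exact (polytope_convex M) hm1 hm2 (le_of_lt (by positivity)) (le_of_lt (by positivity))
    (by field_simp; ring)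

lemma feas_smul {M : FinMatroid E} {x d : E → ℝ} (hx : x ∈ M.polytope) (h : feas M x d)
    {s : ℝ} (hs : 0 ≤ s) : feas M x (s • d) := by
  rcases eq_or_lt_of_le hs with h0 | h0
  · have : s • d = 0 := by rw [← h0, zero_smul]
    rw [this]; exact feas_zero hx
  · obtain ⟨ε, hε, hm⟩ := h
    exact ⟨ε / s, by positivity, by rwa [smul_smul, div_mul_cancel₀ ε (ne_of_gt h0)]⟩

lemma feas_smul' {M : FinMatroid E} {x d : E → ℝ} (hx : x ∈ M.polytope) (h : feas M x d)
    (h' : feas M x (-d)) (s : ℝ) : feas M x (s • d) := by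
  rcases le_or_gt 0 s with hs | hs
  · exact feas_smul hx h hs
  · have : s • d = (-s) • (-d) := by rw [smul_neg, neg_smul, neg_neg]
    rw [this]
    exact feas_smul hx h' (by linarith)

lemma feas_back {M : FinMatroid E} {x : E → ℝ} {ι : Type} {t : Finset ι} {w : ι → ℝ}
    {g : ι → Finset E} (hw : ∀ i ∈ t, 0 ≤ w i) (h1 : ∑ i ∈ t, w i = 1)
    (hind : ∀ i ∈ t, M.Indep (g i))
    (hx : x = ∑ i ∈ t, w i • indicatorVec (g i)) {i0 : ι} (hi0 : i0 ∈ t)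
    (hwi0 : 0 < w i0) : feas M x (x - indicatorVec (g i0)) := by
  classical
  refine ⟨w i0, hwi0, ?_⟩
  set w' : ι → ℝ := fun j => (1 + w i0) * w j - if j = i0 then w i0 else 0 with hw'
  have hw'0 : ∀ j ∈ t, 0 ≤ w' j := by
    intro j hj
    by_cases hji : j = i0
    · simp only [hw', if_pos hji]
      have h4 : w j = w i0 := by rw [hji]
      rw [h4]
      nlinarith [hwi0, sq_nonneg (w i0)]
    · simp only [hw', if_neg hji]
      have h3 := hw j hj
      nlinarith [mul_nonneg (by linarith : (0:ℝ) ≤ 1 + w i0) h3]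
  have hw'1 : ∑ j ∈ t, w' j = 1 := by
    simp only [hw']
    rw [Finset.sum_sub_distrib, ← Finset.mul_sum, h1, Finset.sum_ite_eq' t i0 (fun _ => w i0)]
    simp [hi0]
  have heq : x + (w i0) • (x - indicatorVec (g i0)) = ∑ j ∈ t, w' j • indicatorVec (g j) := by
    have h2 : ∑ j ∈ t, (if j = i0 then w i0 else 0) • indicatorVec (g j)
        = (w i0) • indicatorVec (g i0) := by
      have hterm : ∀ j ∈ t, (if j = i0 then w i0 else 0) • indicatorVec (g j)
          = if j = i0 then (w i0) • indicatorVec (g i0) else 0 := by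
        intro j hj
        by_cases hji : j = i0
        · rw [if_pos hji, if_pos hji, hji]
        · rw [if_neg hji, if_neg hji, zero_smul]
      rw [Finset.sum_congr rfl hterm, Finset.sum_ite_eq' t i0, if_pos hi0]
    have hsum : ∑ j ∈ t, w' j • indicatorVec (g j)
        = (1 + w i0) • ∑ j ∈ t, w j • indicatorVec (g j) - (w i0) • indicatorVec (g i0) := by
      calc ∑ j ∈ t, w' j • indicatorVec (g j)
          = ∑ j ∈ t, (((1 + w i0) * w j) • indicatorVec (g j)
              - (if j = i0 then w i0 else 0) • indicatorVec (g j)) := by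
            refine Finset.sum_congr rfl (fun j hj => ?_)
            simp only [hw']
            rw [sub_smul]
        _ = ∑ j ∈ t, ((1 + w i0) * w j) • indicatorVec (g j)
              - ∑ j ∈ t, (if j = i0 then w i0 else 0) • indicatorVec (g j) :=
            Finset.sum_sub_distrib _ _
        _ = (1 + w i0) • ∑ j ∈ t, w j • indicatorVec (g j) - (w i0) • indicatorVec (g i0) := by
            rw [h2, Finset.smul_sum]
            congr 1
            exact Finset.sum_congr rfl (fun j hj => mul_smul _ _ _)
    rw [hsum, ← hx]
    funext y
    simp only [Pi.add_apply, Pi.sub_apply, Pi.smul_apply, smul_eq_mul]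
    ring
  rw [heq]
  exact comb_mem_polytope M t w' g hw'0 hw'1 hind

end ProofAux


-- ===================== Part C: main argument =====================

namespace ProofAux

variable {E : Type} [Fintype E] [DecidableEq E]

lemma ind_mem {S : Finset E} {y : E} (h : y ∈ S) : indicatorVec S y = 1 := by
  simp [indicatorVec, h]

lemma ind_nmem {S : Finset E} {y : E} (h : y ∉ S) : indicatorVec S y = 0 := by
  simp [indicatorVec, h]

/-- The basic contradiction tool: a nonzero two-sided feasible direction that keeps
the budget constraint contradicts extremality. -/
lemma tool {M : FinMatroid E} {c : E → ℝ} {b : ℝ} {x : E → ℝ}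
    (hx : x ∈ Set.extremePoints ℝ
      (M.polytope ∩ {y : E → ℝ | ∑ e : E, c e * y e ≤ b}))
    {d : E → ℝ} (hd : feas M x d) (hd' : feas M x (-d)) (hne : d ≠ 0)
    (hbud : ∑ e : E, c e * d e = 0 ∨ ∑ e : E, c e * x e < b) : False := by
  have hxP : x ∈ M.polytope := hx.1.1
  have hxH : ∑ e : E, c e * x e ≤ b := hx.1.2
  obtain ⟨ε1, hε1, hm1⟩ := hd
  obtain ⟨ε2, hε2, hm2⟩ := hd'
  set cd := ∑ e : E, c e * d e with hcd
  have hsum : ∀ (r : ℝ) (v : E → ℝ),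
      ∑ e : E, c e * (x + r • v) e = (∑ e : E, c e * x e) + r * (∑ e : E, c e * v e) := by
    intro r v
    rw [Finset.mul_sum, ← Finset.sum_add_distrib]
    refine Finset.sum_congr rfl fun e _ => ?_
    simp only [Pi.add_apply, Pi.smul_apply, smul_eq_mul]
    ring
  have hnegsum : ∑ e : E, c e * (-d) e = -cd := by
    rw [hcd, ← Finset.sum_neg_distrib]
    exact Finset.sum_congr rfl fun e _ => by simp [mul_neg]
  have key : ∀ ε : ℝ, 0 < ε → ε ≤ ε1 → ε ≤ ε2 →
      (∑ e : E, c e * x e) + ε * cd ≤ b → (∑ e : E, c e * x e) - ε * cd ≤ b → False := by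
    intro ε hε hle1 hle2 hb1 hb2
    have hy : x + ε • d ∈ M.polytope := feas_shrink hxP hε1 hm1 hε hle1
    have hz : x + ε • (-d) ∈ M.polytope := feas_shrink hxP hε2 hm2 hε hle2
    have hyH : ∑ e : E, c e * (x + ε • d) e ≤ b := by rw [hsum]; exact hb1
    have hzH : ∑ e : E, c e * (x + ε • (-d)) e ≤ b := by
      rw [hsum, hnegsum]; linarith
    have hmid : x ∈ openSegment ℝ (x + ε • d) (x + ε • (-d)) := by
      refine ⟨1/2, 1/2, by norm_num, by norm_num, by norm_num, ?_⟩
      funext y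
      simp only [Pi.add_apply, Pi.smul_apply, Pi.neg_apply, smul_eq_mul]
      ring
    have hres := hx.2 ⟨hy, hyH⟩ ⟨hz, hzH⟩ hmid
    apply hne
    funext y
    have h8 := congrFun hres y
    simp only [Pi.add_apply, Pi.smul_apply, smul_eq_mul] at h8
    have h9 : ε * d y = 0 := by linarith
    rcases mul_eq_zero.mp h9 with h | h
    · exact absurd h (ne_of_gt hε)
    · simpa using h
  rcases hbud with h0 | hlt
  · refine key (min ε1 ε2) (lt_min hε1 hε2) (min_le_left _ _) (min_le_right _ _) ?_ ?_ <;>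
      rw [show cd = 0 from h0] <;> simp [hxH]
  · set s := ∑ e : E, c e * x e with hs
    have habs : (0:ℝ) ≤ |cd| := abs_nonneg cd
    set ε := min (min ε1 ε2) ((b - s) / (|cd| + 1)) with hε
    have hq : 0 < (b - s) / (|cd| + 1) := div_pos (by linarith) (by linarith)
    have hεpos : 0 < ε := lt_min (lt_min hε1 hε2) hq
    have hεle : ε ≤ (b - s) / (|cd| + 1) := min_le_right _ _
    have h2 : (b - s) / (|cd| + 1) * (|cd| + 1) = b - s :=
      div_mul_cancel₀ _ (by linarith)
    have hkey : ε * |cd| < b - s := by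
      nlinarith [mul_le_mul_of_nonneg_right hεle habs, hq]
    refine key ε hεpos ((min_le_left _ _).trans (min_le_left _ _))
      ((min_le_left _ _).trans (min_le_right _ _)) ?_ ?_
    · nlinarith [mul_le_mul_of_nonneg_left (le_abs_self cd) (le_of_lt hεpos)]
    · nlinarith [mul_le_mul_of_nonneg_left (neg_abs_le cd) (le_of_lt hεpos)]

/-- Combine two linearly independent two-sided feasible directions into a
contradiction with extremality, in the presence of one budget constraint. -/
lemma combine {M : FinMatroid E} {c : E → ℝ} {b : ℝ} {x : E → ℝ}
    (hx : x ∈ Set.extremePoints ℝ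
      (M.polytope ∩ {y : E → ℝ | ∑ e : E, c e * y e ≤ b}))
    {d1 d2 : E → ℝ} (h1 : feas M x d1) (h1' : feas M x (-d1))
    (h2 : feas M x d2) (h2' : feas M x (-d2))
    (hli : ∀ s t : ℝ, s • d1 + t • d2 = 0 → s = 0 ∧ t = 0) : False := by
  have hxP : x ∈ M.polytope := hx.1.1
  set c1 := ∑ e : E, c e * d1 e with hc1
  set c2 := ∑ e : E, c e * d2 e with hc2
  set d := c2 • d1 + (-c1) • d2 with hd
  have hfd : feas M x d :=
    feas_add (feas_smul' hxP h1 h1' c2) (feas_smul' hxP h2 h2' (-c1))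
  have hfd' : feas M x (-d) := by
    have hnd : -d = (-c2) • d1 + c1 • d2 := by
      rw [hd]; funext y
      simp only [Pi.neg_apply, Pi.add_apply, Pi.smul_apply, smul_eq_mul]
      ring
    rw [hnd]
    exact feas_add (feas_smul' hxP h1 h1' (-c2)) (feas_smul' hxP h2 h2' c1)
  have hcd : ∑ e : E, c e * d e = 0 := by
    have hterm : ∀ e ∈ (Finset.univ : Finset E),
        c e * d e = c2 * (c e * d1 e) + (-c1) * (c e * d2 e) := by
      intro e _
      simp only [hd, Pi.add_apply, Pi.smul_apply, smul_eq_mul]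
      ring
    rw [Finset.sum_congr rfl hterm, Finset.sum_add_distrib, ← Finset.mul_sum,
      ← Finset.mul_sum, ← hc1, ← hc2]
    ring
  by_cases hd0 : d = 0
  · obtain ⟨hc2z, hc1z⟩ := hli c2 (-c1) hd0
    have hne1 : d1 ≠ 0 := by
      intro h
      have := hli 1 0 (by rw [h]; funext y; simp)
      exact one_ne_zero this.1
    exact tool hx h1 h1' hne1 (Or.inl (by rw [← hc1]; linarith))
  · exact tool hx hfd hfd' hd0 (Or.inl hcd)

/-- Three distinct 0/1-indicator vectors give two linearly independent differences. -/
lemma li3 {A B C : Finset E} (hAB : A ≠ B) (hAC : A ≠ C) (hBC : B ≠ C) :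
    ∀ s t : ℝ, s • (indicatorVec A - indicatorVec B)
        + t • (indicatorVec A - indicatorVec C) = 0 → s = 0 ∧ t = 0 := by
  have ev : ∀ (s t : ℝ) (y : E),
      s • (indicatorVec A - indicatorVec B) + t • (indicatorVec A - indicatorVec C) = 0 →
      s * (indicatorVec A y - indicatorVec B y)
        + t * (indicatorVec A y - indicatorVec C y) = 0 := by
    intro s t y h
    have := congrFun h y
    simpa [Pi.add_apply, Pi.smul_apply, Pi.sub_apply, smul_eq_mul] using this
  intro s t h
  by_cases hs : s = 0
  · subst hs
    refine ⟨rfl, ?_⟩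
    obtain ⟨e, he⟩ := exists_mem_symmDiff hAC
    have he1 := ev 0 t e h
    rcases he with ⟨h1, h2⟩ | ⟨h1, h2⟩
    · rw [ind_mem h1, ind_nmem h2] at he1; linarith
    · rw [ind_nmem h2, ind_mem h1] at he1; linarith
  · obtain ⟨e, he⟩ := exists_mem_symmDiff hAB
    have he1 := ev s t e h
    have hst : t = -s := by
      rcases he with ⟨h1, h2⟩ | ⟨h1, h2⟩
      · rw [ind_mem h1, ind_nmem h2] at he1
        by_cases h3 : e ∈ C
        · rw [ind_mem h3] at he1; exact absurd (by linarith) hs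
        · rw [ind_nmem h3] at he1; linarith
      · rw [ind_nmem h2, ind_mem h1] at he1
        by_cases h3 : e ∈ C
        · rw [ind_mem h3] at he1; linarith
        · rw [ind_nmem h3] at he1; exact absurd (by linarith) hs
    subst hst
    exfalso
    apply hs
    obtain ⟨e', he'⟩ := exists_mem_symmDiff hBC
    have he2 := ev s (-s) e' h
    rcases he' with ⟨h1, h2⟩ | ⟨h1, h2⟩
    · by_cases h3 : e' ∈ A
      · rw [ind_mem h3, ind_mem h1, ind_nmem h2] at he2; linarith
      · rw [ind_nmem h3, ind_mem h1, ind_nmem h2] at he2; linarith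
    · by_cases h3 : e' ∈ A
      · rw [ind_mem h3, ind_mem h1, ind_nmem h2] at he2; linarith
      · rw [ind_nmem h3, ind_mem h1, ind_nmem h2] at he2; linarith

lemma swap_identity {A B : Finset E} {e f : E} (heA : e ∈ A) (heB : e ∉ B)
    (hfB : f ∈ B) (hfA : f ∉ A) :
    indicatorVec A - indicatorVec (insert f (A.erase e)) =
      indicatorVec (insert e (B.erase f)) - indicatorVec B := by
  have hef : e ≠ f := fun h => heB (h ▸ hfB)
  funext y
  simp only [Pi.sub_apply]
  by_cases hye : y = e
  · subst hye
    rw [ind_mem heA, ind_nmem heB, ind_mem (Finset.mem_insert_self y _),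
      ind_nmem (by simp [Finset.mem_insert, Finset.mem_erase, hef] : y ∉ insert f (A.erase y))]
  · by_cases hyf : y = f
    · subst hyf
      rw [ind_nmem hfA, ind_mem hfB, ind_mem (Finset.mem_insert_self y _),
        ind_nmem (by simp [Finset.mem_insert, Finset.mem_erase, Ne.symm hef] :
          y ∉ insert e (B.erase y))]
    · have hA' : y ∈ insert f (A.erase e) ↔ y ∈ A := by
        simp [Finset.mem_insert, Finset.mem_erase, hye, hyf]
      have hB' : y ∈ insert e (B.erase f) ↔ y ∈ B := by
        simp [Finset.mem_insert, Finset.mem_erase, hye, hyf]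
      by_cases hyA : y ∈ A
      · rw [ind_mem hyA, ind_mem (hA'.mpr hyA)]
        by_cases hyB : y ∈ B
        · rw [ind_mem hyB, ind_mem (hB'.mpr hyB)]
        · rw [ind_nmem hyB, ind_nmem (fun hh => hyB (hB'.mp hh))]; norm_num
      · rw [ind_nmem hyA, ind_nmem (fun hh => hyA (hA'.mp hh))]
        by_cases hyB : y ∈ B
        · rw [ind_mem hyB, ind_mem (hB'.mpr hyB)]; norm_num
        · rw [ind_nmem hyB, ind_nmem (fun hh => hyB (hB'.mp hh))]

lemma aug_identity {A B : Finset E} {e : E} (heA : e ∈ A) (heB : e ∉ B) :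
    indicatorVec A - indicatorVec (A.erase e) =
      indicatorVec (insert e B) - indicatorVec B := by
  funext y
  simp only [Pi.sub_apply]
  by_cases hye : y = e
  · subst hye
    rw [ind_mem heA, ind_nmem heB, ind_mem (Finset.mem_insert_self y _),
      ind_nmem (Finset.notMem_erase y A)]
  · have hA' : y ∈ A.erase e ↔ y ∈ A := by simp [Finset.mem_erase, hye]
    have hB' : y ∈ insert e B ↔ y ∈ B := by simp [Finset.mem_insert, hye]
    by_cases hyA : y ∈ A
    · rw [ind_mem hyA, ind_mem (hA'.mpr hyA)]
      by_cases hyB : y ∈ B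
      · rw [ind_mem hyB, ind_mem (hB'.mpr hyB)]
      · rw [ind_nmem hyB, ind_nmem (fun hh => hyB (hB'.mp hh))]; norm_num
    · rw [ind_nmem hyA, ind_nmem (fun hh => hyA (hA'.mp hh))]
      by_cases hyB : y ∈ B
      · rw [ind_mem hyB, ind_mem (hB'.mpr hyB)]; norm_num
      · rw [ind_nmem hyB, ind_nmem (fun hh => hyB (hB'.mp hh))]

/-- Two-sided feasibility of differences `1_X - 1_{g j}` where `X` is independent and
`g j` carries positive weight in a representation of `x`. -/
lemma feas_diff {M : FinMatroid E} {x : E → ℝ} {ι : Type} {t : Finset ι} {w : ι → ℝ}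
    {g : ι → Finset E} (hw : ∀ i ∈ t, 0 < w i) (h1 : ∑ i ∈ t, w i = 1)
    (hind : ∀ i ∈ t, M.Indep (g i)) (hx : x = ∑ i ∈ t, w i • indicatorVec (g i))
    {X : Finset E} (hX : M.Indep X) {j : ι} (hj : j ∈ t) :
    feas M x (indicatorVec X - indicatorVec (g j)) := by
  have hxP : x ∈ M.polytope := by
    rw [hx]
    exact comb_mem_polytope M t w g (fun i hi => le_of_lt (hw i hi)) h1 hind
  have h := feas_add (feas_fwd hxP (indicator_mem_polytope M hX))
    (feas_back (fun i hi => le_of_lt (hw i hi)) h1 hind hx hj (hw j hj))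
  have heq : (indicatorVec X - x) + (x - indicatorVec (g j))
      = indicatorVec X - indicatorVec (g j) := by
    funext y; simp only [Pi.add_apply, Pi.sub_apply]; ring
  rwa [heq] at h

end ProofAux


namespace ProofAux

variable {E : Type} [Fintype E] [DecidableEq E]

/-- The case where the support of the representation consists of exactly two
independent sets `A`, `B` with `B.card ≤ A.card`. -/
lemma case_two {M : FinMatroid E} {c : E → ℝ} {b : ℝ} {x : E → ℝ}
    (hx : x ∈ Set.extremePoints ℝ
      (M.polytope ∩ {y : E → ℝ | ∑ e : E, c e * y e ≤ b}))
    {A B : Finset E} (hA : M.Indep A) (hB : M.Indep B) {a : ℝ} (ha : 0 < a) (ha1 : a < 1)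
    (hrep : x = a • indicatorVec A + (1 - a) • indicatorVec B)
    (hBA : B.card ≤ A.card) (h3 : 2 < ((A \ B) ∪ (B \ A)).card) : False := by
  classical
  have hne : A ≠ B := by
    intro h
    subst h
    simp at h3
  -- Bool-indexed representation of x
  set w : Bool → ℝ := fun i => if i then a else 1 - a with hw
  set g : Bool → Finset E := fun i => if i then A else B with hg
  have hwpos : ∀ i ∈ (Finset.univ : Finset Bool), 0 < w i := by
    intro i _
    cases i
    · simpa [hw] using by linarith
    · simpa [hw] using ha
  have hw1 : ∑ i : Bool, w i = 1 := by
    rw [Fintype.sum_bool]; simp [hw]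
  have hgind : ∀ i ∈ (Finset.univ : Finset Bool), M.Indep (g i) := by
    intro i _
    cases i
    · simpa [hg] using hB
    · simpa [hg] using hA
  have hrep' : x = ∑ i : Bool, w i • indicatorVec (g i) := by
    rw [Fintype.sum_bool]
    simpa [hw, hg] using hrep
  have hdiff : ∀ {X : Finset E}, M.Indep X → ∀ (i : Bool),
      feas M x (indicatorVec X - indicatorVec (g i)) := by
    intro X hX i
    exact feas_diff hwpos hw1 hgind hrep' hX (Finset.mem_univ i)
  have hdA : ∀ {X : Finset E}, M.Indep X → feas M x (indicatorVec X - indicatorVec A) := by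
    intro X hX
    simpa [hg] using hdiff hX true
  have hdB : ∀ {X : Finset E}, M.Indep X → feas M x (indicatorVec X - indicatorVec B) := by
    intro X hX
    simpa [hg] using hdiff hX false
  set d1 := indicatorVec A - indicatorVec B with hd1
  have hfd1 : feas M x d1 := hdB hA
  have hfd1' : feas M x (-d1) := by
    have : -d1 = indicatorVec B - indicatorVec A := by rw [hd1]; ring
    rw [this]
    exact hdA hB
  rcases lt_or_eq_of_le hBA with hlt | hceq
  · -- |B| < |A| : plain augmentation
    obtain ⟨e, he, hins⟩ := M.indep_exchange hA hB hlt
    have heA : e ∈ A := (Finset.mem_sdiff.mp he).1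
    have heB : e ∉ B := (Finset.mem_sdiff.mp he).2
    set d2 := indicatorVec (insert e B) - indicatorVec B with hd2
    have hfd2 : feas M x d2 := hdB hins
    have hfd2' : feas M x (-d2) := by
      have hid : -d2 = indicatorVec (A.erase e) - indicatorVec A := by
        rw [hd2, ← aug_identity heA heB]; ring
      rw [hid]
      exact hdA (M.indep_subset hA (Finset.erase_subset e A))
    obtain ⟨e', he'mem, he'ne⟩ :=
      Finset.exists_mem_ne (by omega : 1 < ((A \ B) ∪ (B \ A)).card) e
    have hli : ∀ s t : ℝ, s • d1 + t • d2 = 0 → s = 0 ∧ t = 0 := by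
      intro s t h
      have hev : ∀ y : E, s * (indicatorVec A y - indicatorVec B y)
          + t * (indicatorVec (insert e B) y - indicatorVec B y) = 0 := by
        intro y
        have := congrFun h y
        simpa [hd1, hd2, Pi.add_apply, Pi.smul_apply, Pi.sub_apply, smul_eq_mul] using this
      have h2 : indicatorVec (insert e B) e' = indicatorVec B e' := by
        by_cases hb : e' ∈ B
        · rw [ind_mem hb, ind_mem (Finset.mem_insert_of_mem hb)]
        · rw [ind_nmem hb, ind_nmem (by simp [Finset.mem_insert, he'ne, hb])]
      have hs : s = 0 := by
        have := hev e'
        rw [h2] at this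
        rcases Finset.mem_union.mp he'mem with hm | hm
        · obtain ⟨h4, h5⟩ := Finset.mem_sdiff.mp hm
          rw [ind_mem h4, ind_nmem h5] at this; linarith
        · obtain ⟨h4, h5⟩ := Finset.mem_sdiff.mp hm
          rw [ind_mem h4, ind_nmem h5] at this; linarith
      have ht : t = 0 := by
        have := hev e
        rw [ind_mem heA, ind_nmem heB, ind_mem (Finset.mem_insert_self e B), hs] at this
        linarith
      exact ⟨hs, ht⟩
    exact combine hx hfd1 hfd1' hfd2 hfd2' hli
  · -- equal cardinalities : symmetric exchange
    obtain ⟨e, f, heA, heB, hfB, hfA, hindA, hindB⟩ := M.sym_exchange hA hB hceq.symm hne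
    set d2 := indicatorVec (insert e (B.erase f)) - indicatorVec B with hd2
    have hfd2 : feas M x d2 := hdB hindB
    have hfd2' : feas M x (-d2) := by
      have hid : -d2 = indicatorVec (insert f (A.erase e)) - indicatorVec A := by
        rw [hd2, ← swap_identity heA heB hfB hfA]; ring
      rw [hid]
      exact hdA hindA
    have hef : e ≠ f := fun h => heB (h ▸ hfB)
    -- a third element of the symmetric difference
    have hcard2 : 0 < ((((A \ B) ∪ (B \ A)).erase e).erase f).card := by
      have h5 := Finset.pred_card_le_card_erase (a := e) (s := (A \ B) ∪ (B \ A))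
      have h6 := Finset.pred_card_le_card_erase (a := f) (s := ((A \ B) ∪ (B \ A)).erase e)
      omega
    obtain ⟨e', he'⟩ := Finset.card_pos.mp hcard2
    have he'f : e' ≠ f := Finset.ne_of_mem_erase he'
    have he'e : e' ≠ e := Finset.ne_of_mem_erase (Finset.mem_of_mem_erase he')
    have he'mem : e' ∈ (A \ B) ∪ (B \ A) :=
      Finset.mem_of_mem_erase (Finset.mem_of_mem_erase he')
    have hli : ∀ s t : ℝ, s • d1 + t • d2 = 0 → s = 0 ∧ t = 0 := by
      intro s t h
      have hev : ∀ y : E, s * (indicatorVec A y - indicatorVec B y)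
          + t * (indicatorVec (insert e (B.erase f)) y - indicatorVec B y) = 0 := by
        intro y
        have := congrFun h y
        simpa [hd1, hd2, Pi.add_apply, Pi.smul_apply, Pi.sub_apply, smul_eq_mul] using this
      have h2 : indicatorVec (insert e (B.erase f)) e' = indicatorVec B e' := by
        by_cases hb : e' ∈ B
        · rw [ind_mem hb, ind_mem (Finset.mem_insert_of_mem (Finset.mem_erase.mpr ⟨he'f, hb⟩))]
        · rw [ind_nmem hb, ind_nmem (by
            simp only [Finset.mem_insert, Finset.mem_erase]
            push_neg
            exact ⟨he'e, fun _ => hb⟩)]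
      have hs : s = 0 := by
        have := hev e'
        rw [h2] at this
        rcases Finset.mem_union.mp he'mem with hm | hm
        · obtain ⟨h4, h5⟩ := Finset.mem_sdiff.mp hm
          rw [ind_mem h4, ind_nmem h5] at this; linarith
        · obtain ⟨h4, h5⟩ := Finset.mem_sdiff.mp hm
          rw [ind_mem h4, ind_nmem h5] at this; linarith
      have ht : t = 0 := by
        have := hev e
        rw [ind_mem heA, ind_nmem heB, ind_mem (Finset.mem_insert_self e _), hs] at this
        linarith
      exact ⟨hs, ht⟩
    exact combine hx hfd1 hfd1' hfd2 hfd2' hli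

end ProofAux

open ProofAux

/-- Every extreme point of the intersection of a matroid polytope
with a single budget constraint `∑ e, c e * x e ≤ b` (with `c` nonnegative) has at
most two non-integral entries. -/
theorem extreme_point_at_most_two_fractional {E : Type} [Fintype E] [DecidableEq E]
    (M : FinMatroid E) (c : E → ℝ) (hc : ∀ e, 0 ≤ c e) (b : ℝ) (x : E → ℝ)
    (hx : x ∈ Set.extremePoints ℝ
      (M.polytope ∩ {y : E → ℝ | ∑ e : E, c e * y e ≤ b})) :
    (univ.filter (fun e => x e ≠ 0 ∧ x e ≠ 1)).card ≤ 2 := by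
  classical
  by_contra hcon
  push_neg at hcon
  have hxP : x ∈ M.polytope := hx.1.1
  have hxH : ∑ e : E, c e * x e ≤ b := hx.1.2
  -- extract a finite convex representation of x with positive weights
  have hxP' := hxP
  rw [FinMatroid.polytope, _root_.convexHull_eq] at hxP'
  obtain ⟨ι, t0, w, z, hw0, hw1, hz, hcm⟩ := hxP'
  set g : ι → Finset E := fun i =>
    if h : ∃ B : Finset E, M.Indep B ∧ z i = indicatorVec B then h.choose else ∅ with hgdef
  have hgspec : ∀ i ∈ t0, M.Indep (g i) ∧ z i = indicatorVec (g i) := by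
    intro i hi
    have hex : ∃ B : Finset E, M.Indep B ∧ z i = indicatorVec B := hz i hi
    simp only [hgdef, dif_pos hex]
    exact ⟨hex.choose_spec.1, hex.choose_spec.2⟩
  have hxsum : x = ∑ i ∈ t0, w i • indicatorVec (g i) := by
    rw [← hcm, Finset.centerMass_eq_of_sum_1 _ _ hw1]
    exact Finset.sum_congr rfl (fun i hi => by rw [(hgspec i hi).2])
  set t := t0.filter (fun i => 0 < w i) with ht
  have htsub : t ⊆ t0 := Finset.filter_subset _ _
  have hpos : ∀ i ∈ t, 0 < w i := fun i hi => (Finset.mem_filter.mp hi).2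
  have hsum1 : ∑ i ∈ t, w i = 1 := by
    rw [ht, Finset.sum_filter_of_ne (fun i hi hne => lt_of_le_of_ne (hw0 i hi) (Ne.symm hne))]
    exact hw1
  have hrep : x = ∑ i ∈ t, w i • indicatorVec (g i) := by
    rw [ht, Finset.sum_filter_of_ne]
    · exact hxsum
    · intro i hi hne
      rcases lt_or_eq_of_le (hw0 i hi) with h | h
      · exact h
      · exact absurd (by rw [← h, zero_smul]) hne
  have hgind : ∀ i ∈ t, M.Indep (g i) := fun i hi => (hgspec i (htsub hi)).1
  have hcoord : ∀ y : E, x y = ∑ i ∈ t, w i * indicatorVec (g i) y := by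
    intro y
    calc x y = (∑ i ∈ t, w i • indicatorVec (g i)) y := congrFun hrep y
    _ = ∑ i ∈ t, w i * indicatorVec (g i) y := by
        rw [Finset.sum_apply]
        exact Finset.sum_congr rfl (fun i _ => rfl)
  have hfrac : ∀ y : E, x y ≠ 0 → x y ≠ 1 →
      (∃ i ∈ t, y ∈ g i) ∧ (∃ j ∈ t, y ∉ g j) := by
    intro y h0 h1
    constructor
    · by_contra hcc
      push_neg at hcc
      apply h0
      rw [hcoord y]
      exact Finset.sum_eq_zero (fun i hi => by rw [ind_nmem (hcc i hi), mul_zero])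
    · by_contra hcc
      push_neg at hcc
      apply h1
      rw [hcoord y]
      rw [Finset.sum_congr rfl (fun i hi => by rw [ind_mem (hcc i hi), mul_one])]
      exact hsum1
  -- a fractional coordinate
  obtain ⟨e0, he0⟩ := Finset.card_pos.mp
    (by omega : 0 < (univ.filter (fun e => x e ≠ 0 ∧ x e ≠ 1)).card)
  obtain ⟨-, hx0, hx1⟩ : e0 ∈ univ ∧ x e0 ≠ 0 ∧ x e0 ≠ 1 := by
    simpa using Finset.mem_filter.mp he0
  obtain ⟨⟨i0, hi0t, hi0⟩, ⟨j0, hj0t, hj0⟩⟩ := hfrac e0 hx0 hx1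
  rcases lt_or_eq_of_le hxH with hslack | htight
  · -- the budget constraint is slack
    have hfd : feas M x (indicatorVec (g i0) - indicatorVec (g j0)) :=
      feas_diff hpos hsum1 hgind hrep (hgind i0 hi0t) hj0t
    have hfd' : feas M x (-(indicatorVec (g i0) - indicatorVec (g j0))) := by
      rw [neg_sub]
      exact feas_diff hpos hsum1 hgind hrep (hgind j0 hj0t) hi0t
    have hdne : indicatorVec (g i0) - indicatorVec (g j0) ≠ 0 := by
      intro h
      have := congrFun h e0
      rw [Pi.sub_apply, ind_mem hi0, ind_nmem hj0, Pi.zero_apply] at this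
      norm_num at this
    exact tool hx hfd hfd' hdne (Or.inr hslack)
  · -- the budget constraint is tight
    by_cases h3S : 2 < (t.image g).card
    · obtain ⟨A, B, C, hAS, hBS, hCS, hAB, hAC, hBC⟩ := Finset.two_lt_card_iff.mp h3S
      obtain ⟨iA, hiA, hgA⟩ := Finset.mem_image.mp hAS
      obtain ⟨iB, hiB, hgB⟩ := Finset.mem_image.mp hBS
      obtain ⟨iC, hiC, hgC⟩ := Finset.mem_image.mp hCS
      have hindA : M.Indep A := hgA ▸ hgind iA hiA
      have hindB : M.Indep B := hgB ▸ hgind iB hiB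
      have hindC : M.Indep C := hgC ▸ hgind iC hiC
      have hfd1 : feas M x (indicatorVec A - indicatorVec B) := by
        have := feas_diff hpos hsum1 hgind hrep hindA hiB
        rwa [hgB] at this
      have hfd1' : feas M x (-(indicatorVec A - indicatorVec B)) := by
        rw [neg_sub]
        have := feas_diff hpos hsum1 hgind hrep hindB hiA
        rwa [hgA] at this
      have hfd2 : feas M x (indicatorVec A - indicatorVec C) := by
        have := feas_diff hpos hsum1 hgind hrep hindA hiC
        rwa [hgC] at this
      have hfd2' : feas M x (-(indicatorVec A - indicatorVec C)) := by
        rw [neg_sub]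
        have := feas_diff hpos hsum1 hgind hrep hindC hiA
        rwa [hgA] at this
      exact combine hx hfd1 hfd1' hfd2 hfd2' (li3 hAB hAC hBC)
    · -- at most two sets in the support
      push_neg at h3S
      set A := g i0 with hA
      set B := g j0 with hB
      have hABne : A ≠ B := fun h => hj0 (h ▸ hi0)
      have hsub : ({A, B} : Finset (Finset E)) ⊆ t.image g := by
        intro S hS
        rcases Finset.mem_insert.mp hS with h | h
        · exact h ▸ Finset.mem_image_of_mem g hi0t
        · rw [Finset.mem_singleton.mp h]
          exact Finset.mem_image_of_mem g hj0t
      have hS2 : t.image g = {A, B} := by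
        refine (Finset.eq_of_subset_of_card_le hsub ?_).symm
        rw [Finset.card_insert_of_notMem (by simpa using hABne), Finset.card_singleton]
        exact h3S
      have hgAB : ∀ i ∈ t, g i = A ∨ g i = B := by
        intro i hi
        have : g i ∈ t.image g := Finset.mem_image_of_mem g hi
        rw [hS2] at this
        simpa using this
      set a := ∑ i ∈ t.filter (fun i => g i = A), w i with hadef
      have hsplit0 := (Finset.sum_filter_add_sum_filter_not t (fun i => g i = A)
        (fun i => w i • indicatorVec (g i))).symm
      have h1 : ∑ i ∈ t.filter (fun i => g i = A), w i • indicatorVec (g i)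
          = a • indicatorVec A := by
        rw [hadef, Finset.sum_smul]
        exact Finset.sum_congr rfl (fun i hi => by rw [(Finset.mem_filter.mp hi).2])
      have hsuma : ∑ i ∈ t.filter (fun i => ¬ g i = A), w i = 1 - a := by
        have hh := Finset.sum_filter_add_sum_filter_not t (fun i => g i = A) w
        rw [hsum1] at hh
        rw [hadef]
        linarith
      have h2 : ∑ i ∈ t.filter (fun i => ¬ g i = A), w i • indicatorVec (g i)
          = (1 - a) • indicatorVec B := by
        rw [← hsuma, Finset.sum_smul]
        refine Finset.sum_congr rfl (fun i hi => ?_)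
        obtain ⟨hit, hine⟩ := Finset.mem_filter.mp hi
        rcases hgAB i hit with h | h
        · exact absurd h hine
        · rw [h]
      have hsplit : x = a • indicatorVec A + (1 - a) • indicatorVec B := by
        rw [hrep, hsplit0, h1, h2]
      have hapos : 0 < a := by
        have hi0f : i0 ∈ t.filter (fun i => g i = A) := Finset.mem_filter.mpr ⟨hi0t, rfl⟩
        have := Finset.single_le_sum (f := w)
          (fun i hi => le_of_lt (hpos i (Finset.mem_filter.mp hi).1)) hi0f
        have := hpos i0 hi0t
        rw [hadef]
        linarith [Finset.single_le_sum (f := w)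
          (fun i (hi : i ∈ t.filter (fun i => g i = A)) =>
            le_of_lt (hpos i (Finset.mem_filter.mp hi).1)) hi0f]
      have halt : a < 1 := by
        have hj0f : j0 ∈ t.filter (fun i => ¬ g i = A) := by
          refine Finset.mem_filter.mpr ⟨hj0t, ?_⟩
          intro h
          exact hj0 (by rw [hB, h]; exact hi0)
        have hle := Finset.single_le_sum (f := w)
          (fun i (hi : i ∈ t.filter (fun i => ¬ g i = A)) =>
            le_of_lt (hpos i (Finset.mem_filter.mp hi).1)) hj0f
        rw [hsuma] at hle
        have := hpos j0 hj0t
        linarith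
      have hindA : M.Indep A := hgind i0 hi0t
      have hindB : M.Indep B := hgind j0 hj0t
      -- fractional coordinates lie in the symmetric difference
      have hFsub : (univ.filter (fun e => x e ≠ 0 ∧ x e ≠ 1)) ⊆ (A \ B) ∪ (B \ A) := by
        intro y hy
        obtain ⟨-, hy0, hy1⟩ : y ∈ univ ∧ x y ≠ 0 ∧ x y ≠ 1 := by
          simpa using Finset.mem_filter.mp hy
        have hval := congrFun hsplit y
        rw [Pi.add_apply, Pi.smul_apply, Pi.smul_apply, smul_eq_mul, smul_eq_mul] at hval
        by_cases hyA : y ∈ A <;> by_cases hyB : y ∈ B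
        · rw [ind_mem hyA, ind_mem hyB] at hval
          exact absurd (by linarith) hy1
        · exact Finset.mem_union_left _ (Finset.mem_sdiff.mpr ⟨hyA, hyB⟩)
        · exact Finset.mem_union_right _ (Finset.mem_sdiff.mpr ⟨hyB, hyA⟩)
        · rw [ind_nmem hyA, ind_nmem hyB] at hval
          exact absurd (by linarith) hy0
      have h3sd : 2 < ((A \ B) ∪ (B \ A)).card :=
        lt_of_lt_of_le hcon (Finset.card_le_card hFsub)
      rcases le_or_gt B.card A.card with hle | hlt
      · exact case_two hx hindA hindB hapos halt hsplit hle h3sd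
      · have hsplit' : x = (1 - a) • indicatorVec B + (1 - (1 - a)) • indicatorVec A := by
          rw [hsplit]
          funext y
          simp only [Pi.add_apply, Pi.smul_apply, smul_eq_mul]
          ring
        have h3sd' : 2 < ((B \ A) ∪ (A \ B)).card := by
          rwa [Finset.union_comm]
        exact case_two hx hindB hindA (by linarith) (by linarith) hsplit'
          (le_of_lt hlt) h3sd'
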